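/- If S is a finite nonempty set of positive indices containing no two consecutive integers and whose largest element is n, then Σ_{i∈S} F_i < F_{n+1}. -/
import Mathlib


/-- `F n` is the Fibonacci number in the convention `F 1 = 1, F 2 = 2`,
`F (n+1) = F n + F (n-1)`, i.e. `F n = fib (n+1)`. -/
def F (n : ℕ) : ℕ := Nat.fib (n + 1)

/-- If `S` is a finite nonempty set of positive indices with no two consecutive
integers whose largest element is `n`, then `∑_{i ∈ S} F i < F (n+1)`. -/
theorem sum_fib_lt_of_no_consecutive (n : ℕ) (S : Finset ℕ)
    (hne : S.Nonempty)
    (hpos : ∀ i ∈ S, 1 ≤ i)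
    (hnc : ∀ i ∈ S, i + 1 ∉ S)
    (hmem : n ∈ S) (hmax : ∀ i ∈ S, i ≤ n) :
    ∑ i ∈ S, F i < F (n + 1) := by
  induction n using Nat.strong_induction_on generalizing S with
  | _ n ih =>
    have hn1 : 1 ≤ n := hpos n hmem
    rw [← Finset.add_sum_erase S F hmem]
    by_cases hS : (S.erase n).Nonempty
    · set m := (S.erase n).max' hS with hmdef
      have hmmem : m ∈ S.erase n := Finset.max'_mem _ hS
      have hmS : m ∈ S := Finset.mem_of_mem_erase hmmem
      have hmn : m ≠ n := (Finset.mem_erase.mp hmmem).1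
      have hm2 : m + 2 ≤ n := by
        have h1 : m ≤ n := hmax m hmS
        have h2 : m + 1 ∉ S := hnc m hmS
        have : m + 1 ≠ n := fun h => h2 (h ▸ hmem)
        omega
      have hsum : ∑ i ∈ S.erase n, F i < F (m + 1) := by
        apply ih m (by omega) _ hS
        · exact fun i hi => hpos i (Finset.mem_of_mem_erase hi)
        · intro i hi h
          exact hnc i (Finset.mem_of_mem_erase hi)
            (Finset.mem_of_mem_erase h)
        · exact hmmem
        · exact fun i hi => Finset.le_max' _ i hi
      have hmono : F (m + 1) ≤ F (n - 1) := by
        simp only [F]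
        exact Nat.fib_mono (by omega)
      have hrec : F n + F (n - 1) = F (n + 1) := by
        simp only [F]
        have : n - 1 + 1 = n := by omega
        rw [this]
        rw [show n + 1 + 1 = n + 2 from rfl, Nat.fib_add_two]
        omega
      omega
    · rw [Finset.not_nonempty_iff_eq_empty.mp hS, Finset.sum_empty, add_zero]
      simp only [F]
      exact Nat.fib_lt_fib_succ (by omega)
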